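/- For every family F ⊆ C([n],r)^d there is a monotone family F₀ ⊆ C([n],r)^d with |F₀| = |F| and |∂F₀| ≤ |∂F|. -/

import Mathlib

open Finset

/-- The shadow of a `d`-dimensional uniform family: all tuples obtained from a tuple in `F`
by removing one element from each coordinate. -/
def multiShadow {α : Type*} [DecidableEq α] (d : ℕ) (F : Set (Fin d → Finset α)) :
    Set (Fin d → Finset α) :=
  {T | ∃ S ∈ F, ∃ x : Fin d → α, (∀ i, x i ∈ S i) ∧ ∀ i, T i = (S i).erase (x i)}

/-- `C([n], r)`: the `r`-element subsets of `[n] = {1, …, n}`. -/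
def uniformOn (n r : ℕ) : Set (Finset ℕ) := {A | A ⊆ Finset.Icc 1 n ∧ A.card = r}

/-- `G` is an initial segment of the colexicographic order on `C([n], r)`. -/
def IsColexInitSeg (n r : ℕ) (G : Set (Finset ℕ)) : Prop :=
  G ⊆ uniformOn n r ∧
    ∀ A ∈ G, ∀ B ∈ uniformOn n r, toColex B ≤ toColex A → B ∈ G

/-- A `d`-dimensional family is monotone if every 1-dimensional section (obtained by fixing
all but one of the coordinates) is an initial segment of the colexicographic order. -/
def IsMonotoneFamily (n r d : ℕ) (F : Set (Fin d → Finset ℕ)) : Prop :=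
  ∀ (j : Fin d) (S : Fin d → Finset ℕ),
    IsColexInitSeg n r {A | Function.update S j A ∈ F}


open Colex

lemma swap_step {t : Finset ℕ} (h0 : 0 ∉ t) (hne : t ≠ Finset.Icc 1 #t) :
    ∃ t' : Finset ℕ, 0 ∉ t' ∧ #t' = #t ∧ ∑ x ∈ t', x < ∑ x ∈ t, x := by
  have hy : ∃ y ∈ t, #t < y := by
    by_contra h
    push_neg at h
    apply hne
    apply eq_of_subset_of_card_le
    · intro x hx
      have : 1 ≤ x := by rcases Nat.eq_zero_or_pos x with rfl | h1; exact absurd hx h0; exact h1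
      exact Finset.mem_Icc.2 ⟨this, h x hx⟩
    · rw [Nat.card_Icc]; omega
  obtain ⟨y, hyt, hy⟩ := hy
  have hz : ∃ z, 1 ≤ z ∧ z ≤ #t ∧ z ∉ t := by
    by_contra h
    push_neg at h
    apply hne
    symm
    apply eq_of_subset_of_card_le
    · intro x hx
      rw [Finset.mem_Icc] at hx
      exact h x hx.1 hx.2
    · rw [Nat.card_Icc]; omega
  obtain ⟨z, hz1, hz2, hzt⟩ := hz
  have hzy : z ∉ t.erase y := fun h => hzt (mem_of_mem_erase h)
  refine ⟨insert z (t.erase y), ?_, ?_, ?_⟩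
  · simp only [mem_insert, not_or]
    exact ⟨by omega, fun h => h0 (mem_of_mem_erase h)⟩
  · rw [card_insert_of_notMem hzy, card_erase_of_mem hyt]
    have : 1 ≤ #t := card_pos.2 ⟨y, hyt⟩
    omega
  · rw [sum_insert hzy]
    have h1 : y + ∑ x ∈ t.erase y, x = ∑ x ∈ t, x := Finset.add_sum_erase t id hyt
    omega

lemma sum_Icc_le_sum : ∀ (m : ℕ) (t : Finset ℕ), ∑ x ∈ t, x = m → 0 ∉ t →
    ∑ x ∈ Finset.Icc 1 #t, x ≤ ∑ x ∈ t, x := by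
  intro m
  induction m using Nat.strong_induction_on with
  | _ m ih =>
    intro t hm h0
    by_cases hne : t = Finset.Icc 1 #t
    · exact le_of_eq (by rw [← hne])
    · obtain ⟨t', h0', hcard, hlt⟩ := swap_step h0 hne
      have := ih _ (hm ▸ hlt) t' rfl h0'
      rw [hcard] at this
      omega

lemma sum_Icc_lt_sum {t : Finset ℕ} (h0 : 0 ∉ t) (hne : t ≠ Finset.Icc 1 #t) :
    ∑ x ∈ Finset.Icc 1 #t, x < ∑ x ∈ t, x := by
  obtain ⟨t', h0', hcard, hlt⟩ := swap_step h0 hne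
  have := sum_Icc_le_sum _ t' rfl h0'
  rw [hcard] at this
  omega

namespace KKm
variable {n r k : ℕ} {A B : Finset ℕ}

def U (n r : ℕ) : Finset (Finset ℕ) := (Finset.Icc 1 n).powersetCard r

lemma mem_U : A ∈ U n r ↔ A ∈ uniformOn n r := by
  simp [U, uniformOn, Finset.mem_powersetCard]

def rk (n r : ℕ) (A : Finset ℕ) : ℕ := #{B ∈ U n r | toColex B ≤ toColex A}

def seg (n r k : ℕ) : Finset (Finset ℕ) := {A ∈ U n r | rk n r A ≤ k}

lemma seg_subset_U : seg n r k ⊆ U n r := filter_subset _ _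

lemma rk_mono (h : toColex A ≤ toColex B) : rk n r A ≤ rk n r B :=
  card_le_card (fun C hC => by
    simp only [mem_filter] at hC ⊢; exact ⟨hC.1, hC.2.trans h⟩)

lemma one_le_rk (hA : A ∈ U n r) : 1 ≤ rk n r A :=
  card_pos.2 ⟨A, by simp [hA]⟩

lemma rk_lt_rk (hB : B ∈ U n r) (h : toColex A < toColex B) : rk n r A < rk n r B := by
  apply card_lt_card
  refine ⟨fun C hC => ?_, fun hsub => ?_⟩
  · simp only [mem_filter] at hC ⊢; exact ⟨hC.1, hC.2.trans h.le⟩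
  · have := hsub (by simp [hB] : B ∈ {B' ∈ U n r | toColex B' ≤ toColex B})
    simp only [mem_filter] at this
    exact absurd this.2 (not_le.2 h)

lemma rk_injOn : Set.InjOn (rk n r) (U n r) := by
  intro a ha b hb hab
  by_contra hne
  rcases lt_trichotomy (toColex a) (toColex b) with h | h | h
  · exact absurd hab (rk_lt_rk hb h).ne
  · exact hne (by simpa using h)
  · exact absurd hab.symm (rk_lt_rk ha h).ne

lemma rk_le_card_U : A ∈ U n r → rk n r A ≤ #(U n r) :=
  fun _ => card_le_card (filter_subset _ _)

lemma image_rk_U : (U n r).image (rk n r) = Finset.Icc 1 #(U n r) := by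
  apply eq_of_subset_of_card_le
  · intro x hx
    simp only [mem_image] at hx
    obtain ⟨a, ha, rfl⟩ := hx
    exact Finset.mem_Icc.2 ⟨one_le_rk ha, rk_le_card_U ha⟩
  · rw [Nat.card_Icc, card_image_of_injOn rk_injOn]; omega

lemma image_rk_seg : (seg n r k).image (rk n r) = Finset.Icc 1 (min k #(U n r)) := by
  have : (seg n r k).image (rk n r) = ((U n r).image (rk n r)).filter (· ≤ k) := by
    rw [filter_image]; rfl
  rw [this, image_rk_U]
  ext x; simp only [mem_filter, Finset.mem_Icc, le_min_iff]; omega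

lemma card_seg (hk : k ≤ #(U n r)) : #(seg n r k) = k := by
  rw [← card_image_of_injOn (rk_injOn.mono seg_subset_U), image_rk_seg, Nat.card_Icc]
  omega

lemma seg_mono {k k' : ℕ} (h : k ≤ k') : seg n r k ⊆ seg n r k' := by
  intro a ha; simp only [seg, mem_filter] at *; exact ⟨ha.1, ha.2.trans h⟩

lemma seg_union (k k' : ℕ) : seg n r k ∪ seg n r k' = seg n r (max k k') := by
  ext a; simp only [mem_union, seg, mem_filter, le_max_iff]; tauto

lemma seg_zero : seg n r 0 = ∅ := by
  ext a; simp only [seg, mem_filter, notMem_empty, iff_false, not_and, not_le]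
  exact fun ha => one_le_rk ha

lemma isColexInitSeg_seg : IsColexInitSeg n r ↑(seg n r k) := by
  constructor
  · intro a ha; exact mem_U.1 (seg_subset_U ha)
  · intro a ha b hb hba
    simp only [Finset.coe_filter, Set.mem_setOf_eq, seg, mem_filter] at ha ⊢
    exact ⟨mem_U.2 hb, (rk_mono hba).trans ha.2⟩


lemma subset_of_image_rk_subset {B C : Finset (Finset ℕ)} (hB : B ⊆ U n r) (hC : C ⊆ U n r)
    (h : B.image (rk n r) ⊆ C.image (rk n r)) : B ⊆ C := by
  intro A hA
  have : rk n r A ∈ C.image (rk n r) := h (mem_image_of_mem _ hA)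
  obtain ⟨A', hA', hAA'⟩ := mem_image.1 this
  rwa [← rk_injOn (hC hA') (hB hA) hAA']

lemma image_rk_eq {B C : Finset (Finset ℕ)} (hB : B ⊆ U n r) (hC : C ⊆ U n r)
    (h : B.image (rk n r) = C.image (rk n r)) : B = C :=
  Finset.Subset.antisymm (subset_of_image_rk_subset hB hC h.le)
    (subset_of_image_rk_subset hC hB h.ge)

lemma sum_image_rk {B : Finset (Finset ℕ)} (hB : B ⊆ U n r) :
    ∑ x ∈ B.image (rk n r), x = ∑ A ∈ B, rk n r A :=
  Finset.sum_image fun x hx y hy => rk_injOn (hB hx) (hB hy)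

lemma zero_not_mem_image_rk {B : Finset (Finset ℕ)} (hB : B ⊆ U n r) :
    0 ∉ B.image (rk n r) := by
  intro h
  obtain ⟨A, hA, h0⟩ := mem_image.1 h
  have := one_le_rk (hB hA)
  omega

lemma image_rk_seg_card {B : Finset (Finset ℕ)} (hB : B ⊆ U n r) :
    (seg n r #B).image (rk n r) = Finset.Icc 1 #B := by
  rw [image_rk_seg, min_eq_left (card_le_card hB)]

lemma sum_rk_seg {B : Finset (Finset ℕ)} (hB : B ⊆ U n r) :
    ∑ A ∈ seg n r #B, rk n r A ≤ ∑ A ∈ B, rk n r A := by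
  have h1 := sum_Icc_le_sum _ (B.image (rk n r)) rfl (zero_not_mem_image_rk hB)
  rw [card_image_of_injOn (rk_injOn.mono hB), sum_image_rk hB] at h1
  rw [← sum_image_rk seg_subset_U, image_rk_seg_card hB]
  exact h1

lemma sum_rk_seg_lt {B : Finset (Finset ℕ)} (hB : B ⊆ U n r)
    (hne : B ≠ seg n r #B) : ∑ A ∈ seg n r #B, rk n r A < ∑ A ∈ B, rk n r A := by
  have hcard : #(B.image (rk n r)) = #B := card_image_of_injOn (rk_injOn.mono hB)
  have hne' : B.image (rk n r) ≠ Finset.Icc 1 #(B.image (rk n r)) := by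
    rw [hcard]
    intro h
    exact hne (image_rk_eq hB seg_subset_U (h.trans (image_rk_seg_card hB).symm))
  have h1 := sum_Icc_lt_sum (zero_not_mem_image_rk hB) hne'
  rw [hcard, sum_image_rk hB] at h1
  rw [← sum_image_rk seg_subset_U, image_rk_seg_card hB]
  exact h1


attribute [-instance] instDecidableEqFin

def upf (n : ℕ) : Fin n → ℕ := fun i => (i : ℕ) + 1

lemma upf_strictMono : StrictMono (upf n) := fun a b h => by
  simp only [upf]; omega

def up (b : Finset (Fin n)) : Finset ℕ := b.image (upf n)

def down (n : ℕ) (s : Finset ℕ) : Finset (Fin n) := univ.filter (fun i => (i : ℕ) + 1 ∈ s)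

lemma up_down {s : Finset ℕ} (hs : s ⊆ Finset.Icc 1 n) : up (down n s) = s := by
  ext x
  simp only [up, down, mem_image, mem_filter, mem_univ, true_and, upf]
  constructor
  · rintro ⟨i, hi, rfl⟩; exact hi
  · intro hx
    have hx' := hs hx
    rw [Finset.mem_Icc] at hx'
    refine ⟨⟨x - 1, by omega⟩, ?_, by simp; omega⟩
    simpa [show x - 1 + 1 = x by omega] using hx

lemma down_up (b : Finset (Fin n)) : down n (up b) = b := by
  ext i
  simp only [up, down, mem_image, mem_filter, mem_univ, true_and, upf]
  constructor
  · rintro ⟨i', hi', h⟩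
    have : i' = i := Fin.ext (by omega)
    exact this ▸ hi'
  · intro hi; exact ⟨i, hi, rfl⟩

lemma card_up (b : Finset (Fin n)) : #(up b) = #b :=
  card_image_of_injective _ upf_strictMono.injective

lemma up_mem_U (hb : #b = r) : up (b : Finset (Fin n)) ∈ U n r := by
  rw [U, Finset.mem_powersetCard]
  refine ⟨fun x hx => ?_, by rw [card_up, hb]⟩
  simp only [up, mem_image, upf] at hx
  obtain ⟨i, _, rfl⟩ := hx
  exact Finset.mem_Icc.2 ⟨by omega, by omega⟩

lemma shadow_up (X : Finset (Finset (Fin n))) : shadow (X.image up) = (shadow X).image up := by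
  ext t
  simp only [mem_shadow_iff, mem_image, up]
  constructor
  · rintro ⟨s, ⟨b, hb, rfl⟩, a, ha, rfl⟩
    simp only [mem_image] at ha
    obtain ⟨i, hi, rfl⟩ := ha
    exact ⟨b.erase i, ⟨b, hb, i, hi, rfl⟩, Finset.image_erase upf_strictMono.injective b i⟩
  · rintro ⟨s, ⟨b, hb, i, hi, rfl⟩, rfl⟩
    exact ⟨image (upf n) b, ⟨b, hb, rfl⟩, upf n i, mem_image_of_mem _ hi,
      (Finset.image_erase upf_strictMono.injective b i).symm⟩

lemma kk_transfer {B : Finset (Finset ℕ)} (hB : B ⊆ U n r) :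
    #(shadow (seg n r #B)) ≤ #(shadow B) := by
  classical
  have hBU : #B ≤ #(U n r) := card_le_card hB
  have hBU' : ∀ s ∈ B, s ⊆ Finset.Icc 1 n ∧ #s = r := by
    intro s hs
    have := hB hs
    rwa [U, Finset.mem_powersetCard] at this
  have hsegU : ∀ s ∈ seg n r #B, s ⊆ Finset.Icc 1 n ∧ #s = r := by
    intro s hs
    have := seg_subset_U hs
    rwa [U, Finset.mem_powersetCard] at this
  set 𝒜 : Finset (Finset (Fin n)) := B.image (down n) with h𝒜
  set 𝒞 : Finset (Finset (Fin n)) := (seg n r #B).image (down n) with h𝒞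
  have hupA : 𝒜.image up = B := by
    rw [h𝒜]
    ext s
    simp only [Finset.image_image, mem_image, Function.comp]
    constructor
    · rintro ⟨a, ha, rfl⟩; rwa [up_down (hBU' a ha).1]
    · intro hs; exact ⟨s, hs, up_down (hBU' s hs).1⟩
  have hupC : 𝒞.image up = seg n r #B := by
    rw [h𝒞]
    ext s
    simp only [Finset.image_image, mem_image, Function.comp]
    constructor
    · rintro ⟨a, ha, rfl⟩; rwa [up_down (hsegU a ha).1]
    · intro hs; exact ⟨s, hs, up_down (hsegU s hs).1⟩
  have hcard𝒜 : #𝒜 = #B := le_antisymm card_image_le (hupA ▸ card_image_le)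
  have hcard𝒞 : #𝒞 = #B := by
    have h1 : #𝒞 ≤ #(seg n r #B) := card_image_le
    have h2 : #(seg n r #B) ≤ #𝒞 := hupC ▸ card_image_le
    rw [card_seg hBU] at h1 h2
    omega
  have hsized : (↑𝒜 : Set (Finset (Fin n))).Sized r := by
    rintro a ha
    simp only [h𝒜, coe_image, Set.mem_image, mem_coe] at ha
    obtain ⟨s, hs, rfl⟩ := ha
    have := (hBU' s hs)
    rw [← card_up, up_down this.1, this.2]
  have hinit : IsInitSeg 𝒞 r := by
    constructor
    · rintro a ha
      simp only [h𝒞, coe_image, Set.mem_image, mem_coe] at ha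
      obtain ⟨s, hs, rfl⟩ := ha
      have := (hsegU s hs)
      rw [← card_up, up_down this.1, this.2]
    · rintro a b ha ⟨hba, hbcard⟩
      simp only [h𝒞, mem_image] at ha ⊢
      obtain ⟨s, hs, rfl⟩ := ha
      refine ⟨up b, ?_, down_up b⟩
      have hsU := seg_subset_U hs
      have hbU : up b ∈ U n r := up_mem_U hbcard
      have hlt : toColex (up b) < toColex s := by
        have := (toColex_image_lt_toColex_image (upf_strictMono (n := n))).2 hba
        rwa [show (down n s).image (upf n) = s from up_down (hsegU s hs).1] at this
      simp only [seg, mem_filter] at hs ⊢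
      exact ⟨hbU, le_trans (rk_mono hlt.le) hs.2⟩
  have hkk : #(shadow 𝒞) ≤ #(shadow 𝒜) :=
    Finset.kruskal_katona hsized (by omega) hinit
  calc #(shadow (seg n r #B)) = #((shadow 𝒞).image up) := by rw [← hupC, shadow_up]
    _ = #(shadow 𝒞) := card_image_of_injective _ (Finset.image_injective upf_strictMono.injective)
    _ ≤ #(shadow 𝒜) := hkk
    _ = #((shadow 𝒜).image up) :=
        (card_image_of_injective _ (Finset.image_injective upf_strictMono.injective)).symm
    _ = #(shadow B) := by rw [← hupA, shadow_up]


attribute [instance] instDecidableEqFin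

section Multi
variable {d : ℕ}

abbrev Tup (d : ℕ) := Fin d → Finset ℕ

def TT (n r d : ℕ) : Finset (Tup d) := Fintype.piFinset fun _ => U n r

lemma mem_TT {S : Tup d} : S ∈ TT n r d ↔ ∀ i, S i ∈ U n r := Fintype.mem_piFinset

def proj (j : Fin d) (S : Tup d) : Tup d := Function.update S j ∅

variable {j : Fin d} {t S : Tup d} {F : Finset (Tup d)}

lemma proj_self : proj j S j = ∅ := Function.update_self _ _ _

lemma proj_ne {i : Fin d} (h : i ≠ j) : proj j S i = S i := Function.update_of_ne h _ _

lemma proj_eq_self (h : t j = ∅) : proj j t = t := by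
  funext i
  rcases eq_or_ne i j with rfl | hij
  · rw [proj_self, h]
  · exact proj_ne hij

lemma proj_update (A : Finset ℕ) : proj j (Function.update t j A) = proj j t := by
  simp [proj, Function.update_idem]

lemma update_proj : Function.update (proj j S) j (S j) = S := by
  funext i
  rcases eq_or_ne i j with rfl | hij
  · simp
  · rw [Function.update_of_ne hij, proj_ne hij]

lemma eq_update_of_proj (h : proj j S = t) : S = Function.update t j (S j) := by
  rw [← h, update_proj]

/-- the 1-dimensional section of `F` along coordinate `j` at base tuple `t`. -/
def secF (j : Fin d) (t : Tup d) (F : Finset (Tup d)) : Finset (Finset ℕ) :=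
  (F.filter fun S => proj j S = t).image fun S => S j

lemma mem_secF (ht : t j = ∅) : A ∈ secF j t F ↔ Function.update t j A ∈ F := by
  constructor
  · rintro hA
    simp only [secF, mem_image, mem_filter] at hA
    obtain ⟨S, ⟨hS, hproj⟩, rfl⟩ := hA
    rwa [← eq_update_of_proj hproj]
  · intro hA
    simp only [secF, mem_image, mem_filter]
    refine ⟨Function.update t j A, ⟨hA, ?_⟩, Function.update_self _ _ _⟩
    rw [proj_update, proj_eq_self ht]

lemma secF_empty_of_not_mem (ht : t ∉ F.image (proj j)) : secF j t F = ∅ := by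
  rw [secF, Finset.filter_false_of_mem, Finset.image_empty]
  intro S hS h
  exact ht (mem_image.2 ⟨S, hS, h⟩)

lemma card_fiber_eq_card_secF :
    #(F.filter fun S => proj j S = t) = #(secF j t F) := by
  rw [secF]
  refine (card_image_of_injOn ?_).symm
  intro S hS S' hS' hj
  simp only [coe_filter, Set.mem_setOf_eq] at hS hS'
  rw [eq_update_of_proj hS.2, eq_update_of_proj hS'.2]
  exact congrArg (Function.update t j) hj

lemma card_by_sections {V : Finset (Tup d)} (hV : ∀ S ∈ F, proj j S ∈ V) :
    F.card = ∑ t ∈ V, #(secF j t F) := by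
  rw [card_eq_sum_card_fiberwise hV]
  exact Finset.sum_congr rfl fun t _ => card_fiber_eq_card_secF

lemma secF_subset_U (hF : F ⊆ TT n r d) : secF j t F ⊆ U n r := by
  intro A hA
  simp only [secF, mem_image, mem_filter] at hA
  obtain ⟨S, ⟨hS, _⟩, rfl⟩ := hA
  exact mem_TT.1 (hF hS) j

/-- compression of `F` along coordinate `j`. -/
def comp (n r : ℕ) (j : Fin d) (F : Finset (Tup d)) : Finset (Tup d) :=
  (F.image (proj j)).biUnion fun t =>
    (seg n r #(secF j t F)).image fun A => Function.update t j A

lemma mem_image_proj_self (hS : S ∈ F) : proj j S ∈ F.image (proj j) :=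
  mem_image_of_mem _ hS

lemma proj_self_of_mem_image (ht : t ∈ F.image (proj j)) : t j = ∅ := by
  obtain ⟨S, _, rfl⟩ := mem_image.1 ht
  exact proj_self

lemma comp_subset_TT (hF : F ⊆ TT n r d) : comp n r j F ⊆ TT n r d := by
  intro S hS
  simp only [comp, mem_biUnion, mem_image] at hS
  obtain ⟨t, ht, A, hA, rfl⟩ := hS
  obtain ⟨S₀, hS₀, rfl⟩ := ht
  rw [mem_TT]
  intro i
  rcases eq_or_ne i j with rfl | hij
  · rw [Function.update_self]
    exact seg_subset_U hA
  · rw [Function.update_of_ne hij, proj_ne hij]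
    exact mem_TT.1 (hF hS₀) i

lemma secF_nonempty_of_mem_image (ht : t ∈ F.image (proj j)) : (secF j t F).Nonempty := by
  obtain ⟨S, hS, rfl⟩ := mem_image.1 ht
  exact ⟨S j, by rw [mem_secF proj_self, update_proj]; exact hS⟩

lemma secF_comp (hr : 1 ≤ r) (hF : F ⊆ TT n r d) (ht : t j = ∅) :
    secF j t (comp n r j F) = seg n r #(secF j t F) := by
  ext A
  rw [mem_secF ht]
  simp only [comp, mem_biUnion, mem_image]
  constructor
  · rintro ⟨t', ht', A', hA', hupd⟩
    have ht'j : t' j = ∅ := proj_self_of_mem_image (mem_image.2 ht')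
    have hA'U : A' ∈ U n r := seg_subset_U hA'
    have hAA' : A' = A := by
      have := congrFun hupd j
      rwa [Function.update_self, Function.update_self] at this
    have htt' : t' = t := by
      funext i
      rcases eq_or_ne i j with rfl | hij
      · rw [ht'j, ht]
      · have := congrFun hupd i
        rwa [Function.update_of_ne hij, Function.update_of_ne hij] at this
    rw [← htt', ← hAA']
    exact hA'
  · intro hA
    by_cases htm : t ∈ F.image (proj j)
    · exact ⟨t, mem_image.1 htm, A, hA, rfl⟩
    · rw [secF_empty_of_not_mem htm] at hA
      simp only [card_empty] at hA
      rw [seg_zero] at hA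
      exact absurd hA (notMem_empty A)

lemma card_secF_le (hF : F ⊆ TT n r d) : #(secF j t F) ≤ #(U n r) :=
  card_le_card (secF_subset_U hF)

lemma image_proj_comp (hF : F ⊆ TT n r d) :
    (comp n r j F).image (proj j) = F.image (proj j) := by
  ext t
  simp only [mem_image]
  constructor
  · rintro ⟨S, hS, rfl⟩
    simp only [comp, mem_biUnion, mem_image] at hS
    obtain ⟨t', ht', A, hA, rfl⟩ := hS
    rw [proj_update, proj_eq_self (proj_self_of_mem_image (mem_image.2 ht'))]
    exact ht'
  · rintro ⟨S, hS, rfl⟩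
    have h1 : (secF j (proj j S) F).Nonempty := secF_nonempty_of_mem_image (mem_image_of_mem _ hS)
    have h2 : (seg n r #(secF j (proj j S) F)).Nonempty := by
      rw [← Finset.card_pos, card_seg (card_secF_le hF)]
      exact Finset.card_pos.2 h1
    obtain ⟨A, hA⟩ := h2
    refine ⟨Function.update (proj j S) j A, ?_, ?_⟩
    · simp only [comp, mem_biUnion, mem_image]
      exact ⟨proj j S, ⟨S, hS, rfl⟩, A, hA, rfl⟩
    · rw [proj_update, proj_eq_self proj_self]

lemma card_comp (hr : 1 ≤ r) (hF : F ⊆ TT n r d) : #(comp n r j F) = #F := by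
  rw [card_by_sections (V := F.image (proj j))
      (fun S hS => by rw [← image_proj_comp hF]; exact mem_image_of_mem _ hS),
    card_by_sections (V := F.image (proj j)) (fun S hS => mem_image_of_mem _ hS)]
  refine Finset.sum_congr rfl fun t ht => ?_
  rw [secF_comp hr hF (proj_self_of_mem_image ht), card_seg (card_secF_le hF)]

/-- the termination measure. -/
def mu (n r : ℕ) (F : Finset (Tup d)) : ℕ := ∑ S ∈ F, ∑ i, rk n r (S i)

lemma fiber_sum (ht : t j = ∅) :
    ∑ S ∈ F.filter (fun S => proj j S = t), ∑ i, rk n r (S i) =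
      (∑ A ∈ secF j t F, rk n r A) + #(secF j t F) * ∑ i ∈ univ.erase j, rk n r (t i) := by
  have key : ∀ S ∈ F.filter (fun S => proj j S = t),
      ∑ i, rk n r (S i) = rk n r (S j) + ∑ i ∈ univ.erase j, rk n r (t i) := by
    intro S hS
    simp only [mem_filter] at hS
    rw [← Finset.add_sum_erase univ (fun i => rk n r (S i)) (mem_univ j)]
    congr 1
    refine Finset.sum_congr rfl fun i hi => ?_
    have hij : i ≠ j := (Finset.mem_erase.1 hi).1
    rw [← hS.2, proj_ne hij]
  rw [Finset.sum_congr rfl key, Finset.sum_add_distrib, Finset.sum_const,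
    card_fiber_eq_card_secF, smul_eq_mul]
  congr 1
  rw [secF, Finset.sum_image]
  intro S hS S' hS' hj
  simp only [coe_filter, mem_filter] at hS hS'
  rw [eq_update_of_proj hS.2, eq_update_of_proj hS'.2]
  exact congrArg (Function.update t j) hj

lemma mu_by_sections {V : Finset (Tup d)} (hV : ∀ S ∈ F, proj j S ∈ V)
    (hVz : ∀ t ∈ V, t j = ∅) :
    mu n r F = ∑ t ∈ V,
      ((∑ A ∈ secF j t F, rk n r A) + #(secF j t F) * ∑ i ∈ univ.erase j, rk n r (t i)) := by
  rw [mu, ← Finset.sum_fiberwise_of_maps_to hV (fun S => ∑ i, rk n r (S i))]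
  exact Finset.sum_congr rfl fun t ht => fiber_sum (hVz t ht)

lemma mu_comp_le (hr : 1 ≤ r) (hF : F ⊆ TT n r d) : mu n r (comp n r j F) ≤ mu n r F := by
  rw [mu_by_sections (V := F.image (proj j))
      (fun S hS => by rw [← image_proj_comp hF]; exact mem_image_of_mem _ hS)
      (fun t ht => proj_self_of_mem_image ht),
    mu_by_sections (V := F.image (proj j)) (fun S hS => mem_image_of_mem _ hS)
      (fun t ht => proj_self_of_mem_image ht)]
  refine Finset.sum_le_sum fun t ht => ?_
  rw [secF_comp hr hF (proj_self_of_mem_image ht)]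
  have hc : #(seg n r #(secF j t F)) = #(secF j t F) := card_seg (card_secF_le hF)
  rw [hc]
  exact Nat.add_le_add_right (sum_rk_seg (secF_subset_U hF)) _

lemma mu_comp_lt (hr : 1 ≤ r) (hF : F ⊆ TT n r d) {t₀ : Tup d}
    (ht₀ : t₀ ∈ F.image (proj j)) (hbad : secF j t₀ F ≠ seg n r #(secF j t₀ F)) :
    mu n r (comp n r j F) < mu n r F := by
  rw [mu_by_sections (V := F.image (proj j))
      (fun S hS => by rw [← image_proj_comp hF]; exact mem_image_of_mem _ hS)
      (fun t ht => proj_self_of_mem_image ht),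
    mu_by_sections (V := F.image (proj j)) (fun S hS => mem_image_of_mem _ hS)
      (fun t ht => proj_self_of_mem_image ht)]
  refine Finset.sum_lt_sum (fun t ht => ?_) ⟨t₀, ht₀, ?_⟩
  · rw [secF_comp hr hF (proj_self_of_mem_image ht), card_seg (card_secF_le hF)]
    exact Nat.add_le_add_right (sum_rk_seg (secF_subset_U hF)) _
  · rw [secF_comp hr hF (proj_self_of_mem_image ht₀), card_seg (card_secF_le hF)]
    exact Nat.add_lt_add_right (sum_rk_seg_lt (secF_subset_U hF) hbad) _

/-- the shadow of a single set, as a finset. -/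
def sh1 (A : Finset ℕ) : Finset (Finset ℕ) := A.image (A.erase ·)

lemma mem_shadow_iff_sh1 {𝒜 : Finset (Finset ℕ)} :
    B ∈ shadow 𝒜 ↔ ∃ A ∈ 𝒜, B ∈ sh1 A := by
  rw [mem_shadow_iff]
  simp only [sh1, mem_image]

/-- the multidimensional shadow, as a finset. -/
def msh (F : Finset (Tup d)) : Finset (Tup d) :=
  F.biUnion fun S => Fintype.piFinset fun i => sh1 (S i)

lemma mem_msh {T : Tup d} : T ∈ msh F ↔ ∃ S ∈ F, ∀ i, T i ∈ sh1 (S i) := by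
  simp only [msh, mem_biUnion, Fintype.mem_piFinset]

def WW (j : Fin d) (t : Tup d) (F : Finset (Tup d)) : Finset (Finset ℕ) :=
  ((F.image (proj j)).filter fun t' => ∀ i, i ≠ j → t i ∈ sh1 (t' i)).biUnion
    fun t' => secF j t' F

lemma WW_subset_U (hF : F ⊆ TT n r d) : WW j t F ⊆ U n r := by
  intro A hA
  simp only [WW, mem_biUnion] at hA
  obtain ⟨t', _, hA⟩ := hA
  exact secF_subset_U hF hA

lemma secF_msh (ht : t j = ∅) : secF j t (msh F) = shadow (WW j t F) := by
  ext B
  rw [mem_secF ht, mem_shadow_iff_sh1, mem_msh]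
  constructor
  · rintro ⟨S, hS, hall⟩
    refine ⟨S j, ?_, ?_⟩
    · simp only [WW, mem_biUnion, mem_filter]
      refine ⟨proj j S, ⟨mem_image_of_mem _ hS, fun i hij => ?_⟩, ?_⟩
      · rw [proj_ne hij]
        have := hall i
        rwa [Function.update_of_ne hij] at this
      · rw [mem_secF proj_self, update_proj]
        exact hS
    · have := hall j
      rwa [Function.update_self] at this
  · rintro ⟨A, hA, hB⟩
    simp only [WW, mem_biUnion, mem_filter] at hA
    obtain ⟨t', ⟨ht'm, hcond⟩, hA⟩ := hA
    have ht'j : t' j = ∅ := proj_self_of_mem_image ht'm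
    refine ⟨Function.update t' j A, (mem_secF ht'j).1 hA, fun i => ?_⟩
    rcases eq_or_ne i j with rfl | hij
    · rwa [Function.update_self, Function.update_self]
    · rw [Function.update_of_ne hij, Function.update_of_ne hij]
      exact hcond i hij

lemma WW_comp (hr : 1 ≤ r) (hF : F ⊆ TT n r d) :
    WW j t (comp n r j F) =
      seg n r (((F.image (proj j)).filter fun t' => ∀ i, i ≠ j → t i ∈ sh1 (t' i)).sup
        fun t' => #(secF j t' F)) := by
  set V := (F.image (proj j)).filter fun t' => ∀ i, i ≠ j → t i ∈ sh1 (t' i) with hV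
  have himg : (comp n r j F).image (proj j) = F.image (proj j) := image_proj_comp hF
  have hWW : WW j t (comp n r j F) = V.biUnion fun t' => secF j t' (comp n r j F) := by
    rw [WW, himg, hV]
  rw [hWW]
  have hsec : ∀ t' ∈ V, secF j t' (comp n r j F) = seg n r #(secF j t' F) := by
    intro t' ht'
    have : t' ∈ F.image (proj j) := (mem_filter.1 ht').1
    exact secF_comp hr hF (proj_self_of_mem_image this)
  rcases V.eq_empty_or_nonempty with hVe | hVne
  · rw [hVe]
    simp only [Finset.biUnion_empty, Finset.sup_empty]
    rw [show (⊥ : ℕ) = 0 from rfl, seg_zero]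
  · apply Finset.Subset.antisymm
    · intro A hA
      simp only [mem_biUnion] at hA
      obtain ⟨t', ht', hA⟩ := hA
      rw [hsec t' ht'] at hA
      exact seg_mono (Finset.le_sup ht') hA
    · obtain ⟨t₀, ht₀, hsup⟩ := Finset.exists_mem_eq_sup V hVne fun t' => #(secF j t' F)
      rw [hsup]
      intro A hA
      simp only [mem_biUnion]
      exact ⟨t₀, ht₀, by rw [hsec t₀ ht₀]; exact hA⟩

lemma card_shadow_WW_comp_le (hr : 1 ≤ r) (hF : F ⊆ TT n r d) :
    #(shadow (WW j t (comp n r j F))) ≤ #(shadow (WW j t F)) := by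
  rw [WW_comp hr hF]
  set V := (F.image (proj j)).filter fun t' => ∀ i, i ≠ j → t i ∈ sh1 (t' i) with hV
  set K := V.sup fun t' => #(secF j t' F) with hK
  have hKle : K ≤ #(WW j t F) := by
    rcases V.eq_empty_or_nonempty with hVe | hVne
    · rw [hK, hVe]; simp
    · obtain ⟨t₀, ht₀, hsup⟩ := Finset.exists_mem_eq_sup V hVne fun t' => #(secF j t' F)
      rw [hK, hsup]
      apply card_le_card
      intro A hA
      simp only [WW, mem_biUnion]
      exact ⟨t₀, by rw [← hV]; exact ht₀, hA⟩
  calc #(shadow (seg n r K)) ≤ #(shadow (seg n r #(WW j t F))) :=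
        card_le_card (shadow_monotone (seg_mono hKle))
    _ ≤ #(shadow (WW j t F)) := kk_transfer (WW_subset_U hF)

lemma card_msh_comp_le (hr : 1 ≤ r) (hF : F ⊆ TT n r d) (j : Fin d) :
    #(msh (comp n r j F)) ≤ #(msh F) := by
  set V := (msh (comp n r j F)).image (proj j) ∪ (msh F).image (proj j) with hV
  have hVz : ∀ t ∈ V, t j = ∅ := by
    intro t ht
    rw [hV, mem_union] at ht
    rcases ht with ht | ht
    · exact proj_self_of_mem_image ht
    · exact proj_self_of_mem_image ht
  rw [card_by_sections (V := V) (j := j)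
      (fun S hS => mem_union_left _ (mem_image_of_mem _ hS)),
    card_by_sections (V := V) (j := j)
      (fun S hS => mem_union_right _ (mem_image_of_mem _ hS))]
  refine Finset.sum_le_sum fun t ht => ?_
  rw [secF_msh (hVz t ht), secF_msh (hVz t ht)]
  exact card_shadow_WW_comp_le hr hF

lemma coe_msh (F : Finset (Tup d)) : ↑(msh F) = multiShadow d (↑F : Set (Tup d)) := by
  ext T
  rw [mem_coe, mem_msh]
  simp only [multiShadow, Set.mem_setOf_eq, mem_coe]
  constructor
  · rintro ⟨S, hS, hall⟩
    have : ∀ i, ∃ x ∈ S i, (S i).erase x = T i := by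
      intro i
      have := hall i
      simpa only [sh1, mem_image] using this
    choose x hx1 hx2 using this
    exact ⟨S, hS, x, hx1, fun i => (hx2 i).symm⟩
  · rintro ⟨S, hS, x, hx1, hx2⟩
    refine ⟨S, hS, fun i => ?_⟩
    simp only [sh1, mem_image]
    exact ⟨x i, hx1 i, (hx2 i).symm⟩

def IsComp (n r : ℕ) {d : ℕ} (F : Finset (Tup d)) : Prop :=
  ∀ j : Fin d, ∀ t ∈ F.image (proj j), secF j t F = seg n r #(secF j t F)

lemma section_eq (F : Finset (Tup d)) (j : Fin d) (S : Tup d) :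
    {A | Function.update S j A ∈ (↑F : Set (Tup d))} = ↑(secF j (proj j S) F) := by
  ext A
  simp only [Set.mem_setOf_eq, mem_coe]
  rw [mem_secF proj_self, proj, Function.update_idem]

lemma isComp_monotone (hF : F ⊆ TT n r d) (h : IsComp n r F) :
    IsMonotoneFamily n r d ↑F := by
  intro j S
  rw [section_eq F j S]
  by_cases hm : proj j S ∈ F.image (proj j)
  · rw [h j _ hm]
    exact isColexInitSeg_seg
  · rw [secF_empty_of_not_mem hm]
    exact ⟨by simp, by simp⟩

lemma not_isComp (h : ¬ IsComp n r (F : Finset (Tup d))) :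
    ∃ j : Fin d, ∃ t ∈ F.image (proj j), secF j t F ≠ seg n r #(secF j t F) := by
  simp only [IsComp, not_forall] at h
  obtain ⟨j, t, ht, hne⟩ := h
  exact ⟨j, t, ht, hne⟩

lemma main_loop (hr : 1 ≤ r) : ∀ (m : ℕ) (F : Finset (Tup d)), mu n r F = m →
    F ⊆ TT n r d →
    ∃ G : Finset (Tup d), G ⊆ TT n r d ∧ IsComp n r G ∧ #G = #F ∧ #(msh G) ≤ #(msh F) := by
  intro m
  induction m using Nat.strong_induction_on with
  | _ m ih =>
    intro F hm hF
    by_cases hc : IsComp n r F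
    · exact ⟨F, hF, hc, rfl, le_rfl⟩
    · obtain ⟨j, t₀, ht₀, hbad⟩ := not_isComp hc
      have hlt : mu n r (comp n r j F) < m := hm ▸ mu_comp_lt hr hF ht₀ hbad
      obtain ⟨G, hG1, hG2, hG3, hG4⟩ := ih _ hlt (comp n r j F) rfl (comp_subset_TT hF)
      exact ⟨G, hG1, hG2, hG3.trans (card_comp hr hF),
        hG4.trans (card_msh_comp_le hr hF j)⟩

end Multi
end KKm

theorem stmt2 (n r d : ℕ) (hr : 1 ≤ r) (hd : 1 ≤ d)
    (F : Set (Fin d → Finset ℕ)) (hF : ∀ S ∈ F, ∀ i, S i ∈ uniformOn n r) :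
    ∃ F₀ : Set (Fin d → Finset ℕ), (∀ S ∈ F₀, ∀ i, S i ∈ uniformOn n r) ∧
      IsMonotoneFamily n r d F₀ ∧ F₀.ncard = F.ncard ∧
      (multiShadow d F₀).ncard ≤ (multiShadow d F).ncard := by
  classical
  have hFT : F ⊆ ↑(KKm.TT n r d) := by
    intro S hS
    rw [Finset.mem_coe, KKm.mem_TT]
    exact fun i => KKm.mem_U.2 (hF S hS i)
  have hfin : F.Finite := Set.Finite.subset (KKm.TT n r d).finite_toSet hFT
  set Ff : Finset (Fin d → Finset ℕ) := hfin.toFinset with hFf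
  have hcoe : (↑Ff : Set (Fin d → Finset ℕ)) = F := hfin.coe_toFinset
  have hFfT : Ff ⊆ KKm.TT n r d := by
    intro S hS
    apply hFT
    rw [← hcoe]
    exact hS
  obtain ⟨G, hG1, hG2, hG3, hG4⟩ := KKm.main_loop hr (KKm.mu n r Ff) Ff rfl hFfT
  refine ⟨↑G, ?_, KKm.isComp_monotone hG1 hG2, ?_, ?_⟩
  · intro S hS i
    exact KKm.mem_U.1 (KKm.mem_TT.1 (hG1 hS) i)
  · rw [Set.ncard_coe_finset, ← hcoe, Set.ncard_coe_finset, hG3]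
  · rw [← KKm.coe_msh, ← hcoe, ← KKm.coe_msh, Set.ncard_coe_finset, Set.ncard_coe_finset]
    exact hG4
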